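/- Invariance of ω2² + ω3² along left K-orbits: let I ⊆ ℝ be an interval, Y : I → ℍ differentiable with ‖Y(t)‖ = 1, and φ : I → ℝ differentiable; set Ỹ(t) = exp(φ(t) e1) · Y(t). If Y'(t)·Y(t)* = ω1(t) e1 + ω2(t) e2 + ω3(t) e3 and Ỹ'(t)·Ỹ(t)* = ω̃1(t) e1 + ω̃2(t) e2 + ω̃3(t) e3 with real-valued functions ωi, ω̃i, then ω̃2(t)² + ω̃3(t)² = ω2(t)² + ω3(t)² for all t ∈ I. -/

import Mathlib

open Quaternion Set

/-- The imaginary quaternion unit `i`. -/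
noncomputable def e1 : ℍ[ℝ] := ⟨0, 1, 0, 0⟩
/-- The imaginary quaternion unit `j`. -/
noncomputable def e2 : ℍ[ℝ] := ⟨0, 0, 1, 0⟩
/-- The imaginary quaternion unit `k`. -/
noncomputable def e3 : ℍ[ℝ] := ⟨0, 0, 0, 1⟩

/-- `qexp φ = exp (φ e1) = cos φ + (sin φ) e1`. -/
noncomputable def qexp (φ : ℝ) : ℍ[ℝ] :=
  (Real.cos φ : ℍ[ℝ]) + (Real.sin φ : ℍ[ℝ]) * e1

theorem stmt_9
    (I : Set ℝ) (hI : I.OrdConnected)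
    (Y Y' : ℝ → ℍ[ℝ]) (φ φ' : ℝ → ℝ)
    (hY : ∀ t ∈ I, HasDerivAt Y (Y' t) t)
    (hYnorm : ∀ t ∈ I, ‖Y t‖ = 1)
    (hφ : ∀ t ∈ I, HasDerivAt φ (φ' t) t)
    (Yt' : ℝ → ℍ[ℝ])
    (hYt : ∀ t ∈ I, HasDerivAt (fun s => qexp (φ s) * Y s) (Yt' t) t)
    (ω1 ω2 ω3 ωt1 ωt2 ωt3 : ℝ → ℝ)
    (hYY : ∀ t ∈ I,
      Y' t * star (Y t) =
        ((ω1 t : ℝ) : ℍ[ℝ]) * e1 + ((ω2 t : ℝ) : ℍ[ℝ]) * e2 + ((ω3 t : ℝ) : ℍ[ℝ]) * e3)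
    (hYtYt : ∀ t ∈ I,
      Yt' t * star (qexp (φ t) * Y t) =
        ((ωt1 t : ℝ) : ℍ[ℝ]) * e1 + ((ωt2 t : ℝ) : ℍ[ℝ]) * e2 + ((ωt3 t : ℝ) : ℍ[ℝ]) * e3) :
    ∀ t ∈ I, ωt2 t ^ 2 + ωt3 t ^ 2 = ω2 t ^ 2 + ω3 t ^ 2 := by
  intro t ht
  have hc : HasDerivAt (fun s => (Real.cos (φ s)) • (1 : ℍ[ℝ]))
      ((-Real.sin (φ t) * φ' t) • (1 : ℍ[ℝ])) t :=
    (((Real.hasDerivAt_cos (φ t)).comp t (hφ t ht))).smul_const _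
  have hs : HasDerivAt (fun s => (Real.sin (φ s)) • e1)
      ((Real.cos (φ t) * φ' t) • e1) t :=
    (((Real.hasDerivAt_sin (φ t)).comp t (hφ t ht))).smul_const _
  have hq : HasDerivAt (fun s => qexp (φ s))
      ((-Real.sin (φ t) * φ' t) • (1 : ℍ[ℝ]) + (Real.cos (φ t) * φ' t) • e1) t := by
    have heq : (fun s => qexp (φ s))
        = fun s => (Real.cos (φ s)) • (1 : ℍ[ℝ]) + (Real.sin (φ s)) • e1 := by
      funext s
      simp [qexp, ← Quaternion.coe_mul_eq_smul]
    rw [heq]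
    exact hc.add hs
  have hprod : HasDerivAt (fun s => qexp (φ s) * Y s)
      (((-Real.sin (φ t) * φ' t) • (1 : ℍ[ℝ]) + (Real.cos (φ t) * φ' t) • e1) * Y t
        + qexp (φ t) * Y' t) t := hq.mul (hY t ht)
  have hYt' : Yt' t = ((-Real.sin (φ t) * φ' t) • (1 : ℍ[ℝ]) + (Real.cos (φ t) * φ' t) • e1) * Y t
        + qexp (φ t) * Y' t := (hYt t ht).unique hprod
  have hYstar : Y t * star (Y t) = 1 := by
    rw [Quaternion.self_mul_star]
    have h2 : Quaternion.normSq (Y t) = 1 := by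
      rw [Quaternion.normSq_eq_norm_mul_self, hYnorm t ht]; norm_num
    rw [h2]; simp
  set D : ℍ[ℝ] := (-Real.sin (φ t) * φ' t) • (1 : ℍ[ℝ]) + (Real.cos (φ t) * φ' t) • e1 with hD
  have key : ((ωt1 t : ℝ) : ℍ[ℝ]) * e1 + ((ωt2 t : ℝ) : ℍ[ℝ]) * e2 + ((ωt3 t : ℝ) : ℍ[ℝ]) * e3
      = D * star (qexp (φ t))
        + qexp (φ t) * (((ω1 t : ℝ) : ℍ[ℝ]) * e1 + ((ω2 t : ℝ) : ℍ[ℝ]) * e2 + ((ω3 t : ℝ) : ℍ[ℝ]) * e3) * star (qexp (φ t)) := by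
    rw [← hYY t ht, ← hYtYt t ht, hYt']
    rw [StarMul.star_mul]
    calc (D * Y t + qexp (φ t) * Y' t) * (star (Y t) * star (qexp (φ t)))
        = D * (Y t * star (Y t)) * star (qexp (φ t))
          + qexp (φ t) * (Y' t * star (Y t)) * star (qexp (φ t)) := by noncomm_ring
      _ = _ := by rw [hYstar, mul_one]
  have hcs : Real.cos (φ t) ^ 2 + Real.sin (φ t) ^ 2 = 1 := Real.cos_sq_add_sin_sq _
  have h2 := congrArg QuaternionAlgebra.imJ key
  have h3 := congrArg QuaternionAlgebra.imK key
  simp [hD, qexp, Quaternion.ext_iff] at h2 h3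
  simp [e1, e2, e3] at h2 h3
  rw [h2, h3]
  linear_combination ((Real.cos (φ t) ^ 2 + Real.sin (φ t) ^ 2 + 1) * (ω2 t ^ 2 + ω3 t ^ 2)) * hcs
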